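/- The fixed point u is K-power free: if v ∈ A* satisfies vᴺ ∈ L(u) for some N ≥ K, then v is the empty word, where K = ⌈λC² · max{2(g+1), (#A)²}⌉. -/

import Mathlib

open List Filter

section Defs

variable {A : Type*}

/-- The segment `u_[i,j)` of the sequence `u`. -/
def seg (u : ℕ → A) (i j : ℕ) : List A :=
  (List.range (j - i)).map fun k => u (i + k)

/-- A substitution applied to a word, letter by letter. -/
def substWord (σ : A → List A) (w : List A) : List A := w.flatMap σ

/-- `σ^p` applied to a word. -/
def substPow (σ : A → List A) (p : ℕ) (w : List A) : List A := (substWord σ)^[p] w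

/-- A substitution is primitive if some power of it sends every letter to a word
containing every letter. -/
def IsPrimitiveSubst (σ : A → List A) : Prop :=
  ∃ k : ℕ, ∀ a b : A, a ∈ substPow σ k [b]

/-- `u` is a fixed point of `σ`: the image of every prefix of `u` is again a prefix of `u`. -/
def IsFixedPoint (σ : A → List A) (u : ℕ → A) : Prop :=
  ∀ m : ℕ, substWord σ (seg u 0 m) = seg u 0 (substWord σ (seg u 0 m)).length

/-- `u` is aperiodic under the left shift: `T^i u ≠ u` for all `i ≥ 1`. -/
def AperiodicSeq (u : ℕ → A) : Prop := ∀ i : ℕ, 1 ≤ i → (fun n => u (n + i)) ≠ u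

/-- The set `E_p` of natural `p`-cutting points. -/
def cutPoints (σ : A → List A) (u : ℕ → A) (p : ℕ) : Set ℕ :=
  { m | ∃ n : ℕ, m = (substPow σ p (seg u 0 n)).length }

/-- Unilateral recognizability of `σ` (with fixed point `u`). -/
def UnilaterallyRecognizable (σ : A → List A) (u : ℕ → A) : Prop :=
  ∃ L : ℕ, 1 ≤ L ∧ ∀ i j : ℕ,
    seg u i (i + L) = seg u j (j + L) → i ∈ cutPoints σ u 1 → j ∈ cutPoints σ u 1

/-- `L_n(u)`: the set of factors of `u` of length `n`. -/
def factors (u : ℕ → A) (n : ℕ) : Set (List A) := { w | ∃ i : ℕ, w = seg u i (i + n) }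

/-- `L(u)`: the language of `u` (including the empty word). -/
def lang (u : ℕ → A) : Set (List A) := { w | ∃ i n : ℕ, w = seg u i (i + n) }

/-- `w^n`: the concatenation of `n` copies of `w`. -/
def wpow (w : List A) (n : ℕ) : List A := (List.replicate n w).flatten

/-- A nonempty word `v` is primitive if `v = w^n` with `w` nonempty forces `w = v`. -/
def PrimitiveWord (v : List A) : Prop :=
  ∀ w : List A, w ≠ [] → ∀ n : ℕ, 1 ≤ n → v = wpow w n → w = v

/-- `g` is a gap of occurrences of `w` in `u` if every interval of length `g` in `ℤ₊`
contains an occurrence of `w`. -/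
def IsGap (u : ℕ → A) (w : List A) (g : ℕ) : Prop := ∀ i : ℕ, w <:+: seg u i (i + g)

/-- The minimal gap of a word. -/
noncomputable def minGap (u : ℕ → A) (w : List A) : ℕ := sInf { g | IsGap u w g }

/-- `g`: the maximum over `w ∈ L₂(u)` of the minimal gap of `w`. -/
noncomputable def gapConst (u : ℕ → A) : ℕ :=
  sSup { m | ∃ w ∈ factors u 2, m = minGap u w }

/-- A natural `p`-cutting `{α, σ^p(u_{i'}), …, σ^p(u_{i'+k-1}), β}` of `u_[i,i+ℓ)`. -/
def IsNaturalCutting (σ : A → List A) (u : ℕ → A) (p i ℓ : ℕ)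
    (α : List A) (i' k : ℕ) (β : List A) : Prop :=
  1 ≤ k ∧
  α <:+ substPow σ p [u (i' - 1)] ∧
  β <+: substPow σ p [u (i' + k)] ∧
  seg u i (i + ℓ) = α ++ substPow σ p (seg u i' (i' + k)) ++ β ∧
  i + α.length = (substPow σ p (seg u 0 i')).length

section Fin

variable [Fintype A] [Nonempty A] [DecidableEq A]

/-- The incidence matrix of a substitution: the `(a,b)` entry is `|σ(a)|_b`. -/
def incMatrix (σ : A → List A) : Matrix A A ℕ := Matrix.of fun a b => (σ a).count b

/-- The incidence matrix as a real matrix. -/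
noncomputable def incMatrixR (σ : A → List A) : Matrix A A ℝ :=
  Matrix.of fun a b => ((σ a).count b : ℝ)

/-- `S_p = max_{a ∈ A} |σ^p(a)|`. -/
def Sp (σ : A → List A) (p : ℕ) : ℕ :=
  Finset.univ.sup' Finset.univ_nonempty fun a => (substPow σ p [a]).length

/-- `I_p = min_{a ∈ A} |σ^p(a)|`. -/
def Ip (σ : A → List A) (p : ℕ) : ℕ :=
  Finset.univ.inf' Finset.univ_nonempty fun a => (substPow σ p [a]).length

/-- `C = ⌈(max_b β_b)/(min_b β_b)⌉` for a positive eigenvector `β`. -/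
noncomputable def Cst (β : A → ℝ) : ℕ :=
  ⌈(Finset.univ.sup' Finset.univ_nonempty β) / (Finset.univ.inf' Finset.univ_nonempty β)⌉₊

/-- `K = ⌈λ C² max{2(g+1), (#A)²}⌉`. -/
noncomputable def Kst (u : ℕ → A) (lam : ℝ) (β : A → ℝ) : ℕ :=
  ⌈lam * (Cst β : ℝ) ^ 2 *
    max (2 * ((gapConst u : ℝ) + 1)) ((Fintype.card A : ℝ) ^ 2)⌉₊

/-- The constant `p₀` of Lemma 4.2. -/
noncomputable def p0 (u : ℕ → A) (lam : ℝ) (β : A → ℝ) : ℕ :=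
  (Kst u lam β) ^ 2 * ((Cst β) ^ 4 * (Kst u lam β + 1) + 2 * (Cst β) ^ 2 + 1) *
    (∑ n ∈ Finset.Icc ((Cst β) ^ 2 * (Kst u lam β + 1) + 2)
        ((Kst u lam β + 1) * (Cst β) ^ 6 + 2 * (Cst β) ^ 4 + (Cst β) ^ 2 + 2), n) + 1

/-- The constant `L₀ = (C⁴(K+1)+2C²+1) S_{p₀}`. -/
noncomputable def L0 (σ : A → List A) (u : ℕ → A) (lam : ℝ) (β : A → ℝ) : ℕ :=
  ((Cst β) ^ 4 * (Kst u lam β + 1) + 2 * (Cst β) ^ 2 + 1) * Sp σ (p0 u lam β)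

/-- The ℓ¹ norm of a vector. -/
def l1norm (f : A → ℝ) : ℝ := ∑ a, |f a|

/-- The projective metric on positive row vectors. -/
noncomputable def projMetric (x y : A → ℝ) : ℝ :=
  Real.log ((Finset.univ.sup' Finset.univ_nonempty fun a => x a / y a) /
    (Finset.univ.inf' Finset.univ_nonempty fun a => x a / y a))

/-- The Birkhoff contraction coefficient of a matrix. -/
noncomputable def birkhoff (M : Matrix A A ℝ) : ℝ :=
  sSup { r | ∃ x y : A → ℝ, (∀ a, 0 < x a) ∧ (∀ a, 0 < y a) ∧
    LinearIndependent ℝ ![x, y] ∧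
    r = projMetric (Matrix.vecMul x M) (Matrix.vecMul y M) / projMetric x y }

end Fin

/-- Membership in the vertex set `V^*`: pairs `(xac, ybc)` of factors of `u` of length
`N + L₁ + 1` with `a ≠ b` and `|c| = L₁`. -/
def memVstar (u : ℕ → A) (N L₁ : ℕ) (p : List A × List A) : Prop :=
  ∃ (x y c : List A) (a b : A), a ≠ b ∧
    x.length = N ∧ y.length = N ∧ c.length = L₁ ∧
    p.1 = x ++ a :: c ∧ p.2 = y ++ b :: c ∧
    p.1 ∈ factors u (N + L₁ + 1) ∧ p.2 ∈ factors u (N + L₁ + 1)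

/-- An edge between representatives: there is a word `w` with `s'w` a suffix of `σ(s)` and
`t'w` a suffix of `σ(t)`. -/
def edgeRep (σ : A → List A) (p q : List A × List A) : Prop :=
  ∃ w : List A, w ≠ [] ∧ (q.1 ++ w) <:+ substWord σ p.1 ∧ (q.2 ++ w) <:+ substWord σ p.2

/-- An edge in the graph `G` between the unordered pairs represented by `p` and `q`. -/
def graphEdge (σ : A → List A) (p q : List A × List A) : Prop :=
  edgeRep σ p q ∨ edgeRep σ p q.swap ∨ edgeRep σ p.swap q ∨ edgeRep σ p.swap q.swap

/-- A representative generates a gap of natural 1-cutting points. -/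
def genGapRep (σ : A → List A) (p : List A × List A) : Prop :=
  ∃ (α β : A) (γ δ : List A),
    (σ α <:+ σ β ∧ σ α ≠ σ β) ∧
    List.Forall₂ (fun s t => σ s = σ t) γ δ ∧
    (α :: γ) <:+ substWord σ p.1 ∧ (β :: δ) <:+ substWord σ p.2

/-- The unordered pair represented by `p` generates a gap of natural 1-cutting points. -/
def genGap (σ : A → List A) (p : List A × List A) : Prop :=
  genGapRep σ p ∨ genGapRep σ p.swap

/-- The list of consecutive two-letter blocks of a word. -/
def pairsList (l : List A) : List (List A) :=
  List.zipWith (fun a b => [a, b]) l l.tail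

end Defs


section Aux
variable {A : Type*}

theorem seg_length (u : ℕ → A) (i j : ℕ) : (seg u i j).length = j - i := by
  simp [seg]

theorem seg_getElem (u : ℕ → A) (i j r : ℕ) (h : r < (seg u i j).length) :
    (seg u i j)[r] = u (i + r) := by
  simp [seg]

theorem seg_append (u : ℕ → A) {i j k : ℕ} (h1 : i ≤ j) (h2 : j ≤ k) :
    seg u i j ++ seg u j k = seg u i k := by
  have h : k - i = (j - i) + (k - j) := by omega
  rw [seg, seg, seg, h, List.range_add, List.map_append, List.map_map]
  congr 1
  apply List.map_congr_left
  intro x hx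
  simp only [Function.comp]
  congr 1
  omega

theorem seg_singleton (u : ℕ → A) (i : ℕ) : seg u i (i+1) = [u i] := by
  simp [seg, List.range_succ]

theorem seg_infix (u : ℕ → A) {i i' j' j : ℕ} (h1 : i ≤ i') (h2 : i' ≤ j') (h3 : j' ≤ j) :
    seg u i' j' <:+: seg u i j := by
  refine ⟨seg u i i', seg u j' j, ?_⟩
  rw [List.append_assoc, seg_append u h2 h3, seg_append u h1 (le_trans h2 h3)]

theorem substWord_append (σ : A → List A) (w z : List A) :
    substWord σ (w ++ z) = substWord σ w ++ substWord σ z := by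
  simp [substWord]

theorem substPow_zero (σ : A → List A) (w : List A) : substPow σ 0 w = w := rfl

theorem substPow_succ (σ : A → List A) (p : ℕ) (w : List A) :
    substPow σ (p+1) w = substWord σ (substPow σ p w) :=
  Function.iterate_succ_apply' _ _ _

theorem substPow_add (σ : A → List A) (p q : ℕ) (w : List A) :
    substPow σ (p+q) w = substPow σ p (substPow σ q w) :=
  Function.iterate_add_apply _ _ _ _

theorem substPow_append (σ : A → List A) (p : ℕ) (w z : List A) :
    substPow σ p (w ++ z) = substPow σ p w ++ substPow σ p z := by
  induction p with
  | zero => rfl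
  | succ p ih => rw [substPow_succ, substPow_succ, substPow_succ, ih, substWord_append]

theorem substPow_ne_nil (σ : A → List A) (hσne : ∀ a, σ a ≠ []) (p : ℕ) {w : List A}
    (hw : w ≠ []) : substPow σ p w ≠ [] := by
  induction p with
  | zero => exact hw
  | succ p ih =>
    rw [substPow_succ]
    rcases List.exists_cons_of_ne_nil ih with ⟨a, t, ht⟩
    rw [ht]
    simp only [substWord, List.flatMap_cons]
    intro hc
    exact hσne a (List.append_eq_nil_iff.mp hc).1

theorem substPow_infix (σ : A → List A) (p : ℕ) {w z : List A} (h : w <:+: z) :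
    substPow σ p w <:+: substPow σ p z := by
  rcases h with ⟨s, t, rfl⟩
  rw [substPow_append, substPow_append]
  exact ⟨substPow σ p s, substPow σ p t, rfl⟩

theorem infix_singleton_of_mem {a : A} {l : List A} (h : a ∈ l) : [a] <:+: l := by
  rcases List.append_of_mem h with ⟨s, t, rfl⟩
  exact ⟨s, t, by simp⟩

theorem substPow_singleton_infix (σ : A → List A) (p : ℕ) {a : A} {w : List A} (h : a ∈ w) :
    substPow σ p [a] <:+: substPow σ p w :=
  substPow_infix σ p (infix_singleton_of_mem h)

end Aux

section Blocks
variable {A : Type*}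

theorem substPow_nil (σ : A → List A) (p : ℕ) : substPow σ p ([] : List A) = [] := by
  induction p with
  | zero => rfl
  | succ p ih => rw [substPow_succ, ih]; rfl

theorem seg_drop (u : ℕ → A) (i j : ℕ) : (seg u 0 j).drop i = seg u i j := by
  by_cases h : i ≤ j
  · have h0 := seg_append u (Nat.zero_le i) h
    rw [← h0, List.drop_append_of_le_length (by simp [seg_length])]
    have h3 : List.drop i (seg u 0 i) = [] :=
      List.drop_eq_nil_of_le (by rw [seg_length]; omega)
    rw [h3, List.nil_append]
  · have h1 : (seg u 0 j).length = j := by rw [seg_length]; omega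
    rw [List.drop_eq_nil_of_le (by omega)]
    have h2 : j - i = 0 := by omega
    simp [seg, h2]

/-- The `p`-cutting point after `n` level-`p` blocks. -/
def cpt (σ : A → List A) (u : ℕ → A) (p n : ℕ) : ℕ :=
  (substPow σ p (seg u 0 n)).length

variable {σ : A → List A} {u : ℕ → A}

theorem fixpow (hfix : IsFixedPoint σ u) (p m : ℕ) :
    substPow σ p (seg u 0 m) = seg u 0 (cpt σ u p m) := by
  induction p with
  | zero =>
    show seg u 0 m = seg u 0 ((seg u 0 m).length)
    rw [seg_length, Nat.sub_zero]
  | succ p ih =>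
    have h1 : substPow σ (p+1) (seg u 0 m) = substWord σ (seg u 0 (cpt σ u p m)) := by
      rw [substPow_succ, ih]
    have h2 : cpt σ u (p+1) m = (substWord σ (seg u 0 (cpt σ u p m))).length := by
      rw [cpt, h1]
    rw [h1, h2, hfix (cpt σ u p m)]
    rw [seg_length, Nat.sub_zero]

theorem cpt_zero (σ : A → List A) (u : ℕ → A) (p : ℕ) : cpt σ u p 0 = 0 := by
  have : seg u 0 0 = [] := by simp [seg]
  rw [cpt, this, substPow_nil]
  rfl

theorem cpt_succ (σ : A → List A) (u : ℕ → A) (p n : ℕ) :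
    cpt σ u p (n+1) = cpt σ u p n + (substPow σ p [u n]).length := by
  have h : seg u 0 n ++ seg u n (n+1) = seg u 0 (n+1) :=
    seg_append u (Nat.zero_le n) (Nat.le_succ n)
  rw [cpt, ← h, substPow_append, List.length_append, seg_singleton]
  rfl

theorem cpt_strictMono (hσne : ∀ a, σ a ≠ []) (p : ℕ) : StrictMono (cpt σ u p) := by
  apply strictMono_nat_of_lt_succ
  intro n
  rw [cpt_succ]
  have := substPow_ne_nil σ hσne p (w := [u n]) (by simp)
  have : 0 < (substPow σ p [u n]).length := List.length_pos_iff.mpr this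
  omega

theorem cpt_le_self (hσne : ∀ a, σ a ≠ []) (p n : ℕ) : n ≤ cpt σ u p n := by
  have h0 : cpt σ u p 0 = 0 := cpt_zero σ u p
  induction n with
  | zero => omega
  | succ n ih =>
    have h := cpt_strictMono (u := u) hσne p (show n < n + 1 by omega)
    omega

theorem seg_block (hfix : IsFixedPoint σ u) (p : ℕ) {n m : ℕ} (h : n ≤ m) :
    substPow σ p (seg u n m) = seg u (cpt σ u p n) (cpt σ u p m) := by
  have hsplit : seg u 0 n ++ seg u n m = seg u 0 m := seg_append u (Nat.zero_le n) h
  have h2 := congrArg (substPow σ p) hsplit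
  rw [substPow_append, fixpow hfix p n, fixpow hfix p m] at h2
  have h3 : substPow σ p (seg u n m)
      = (seg u 0 (cpt σ u p n) ++ substPow σ p (seg u n m)).drop
          (seg u 0 (cpt σ u p n)).length := by
    rw [List.drop_left]
  rw [h3, h2, seg_length, Nat.sub_zero, seg_drop]

end Blocks

set_option linter.unusedSectionVars false

section Growth
variable {A : Type*} [Fintype A] [Nonempty A] [DecidableEq A] {σ : A → List A}

theorem Ip_le (σ : A → List A) (p : ℕ) (a : A) : Ip σ p ≤ (substPow σ p [a]).length :=
  Finset.inf'_le _ (Finset.mem_univ a)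

theorem le_Sp (σ : A → List A) (p : ℕ) (a : A) : (substPow σ p [a]).length ≤ Sp σ p :=
  Finset.le_sup' (fun a => (substPow σ p [a]).length) (Finset.mem_univ a)

theorem substPow_cons (σ : A → List A) (p : ℕ) (a : A) (w : List A) :
    substPow σ p (a :: w) = substPow σ p [a] ++ substPow σ p w := by
  have : (a :: w) = [a] ++ w := rfl
  rw [this, substPow_append]

theorem len_substPow_lower (σ : A → List A) (p : ℕ) (w : List A) :
    w.length * Ip σ p ≤ (substPow σ p w).length := by
  induction w with
  | nil => simp [substPow_nil]
  | cons a w ih =>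
    rw [substPow_cons, List.length_append, List.length_cons, Nat.succ_mul, Nat.add_comm]
    exact Nat.add_le_add (Ip_le σ p a) ih

theorem Ip_add (σ : A → List A) (p q : ℕ) : Ip σ q * Ip σ p ≤ Ip σ (p + q) := by
  apply Finset.le_inf'
  intro a _
  calc Ip σ q * Ip σ p ≤ (substPow σ q [a]).length * Ip σ p := by
        exact Nat.mul_le_mul_right _ (Ip_le σ q a)
    _ ≤ (substPow σ p (substPow σ q [a])).length := len_substPow_lower σ p _
    _ = (substPow σ (p + q) [a]).length := by rw [substPow_add]

theorem Ip_pos (hσne : ∀ a, σ a ≠ []) (p : ℕ) : 1 ≤ Ip σ p := by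
  apply Finset.le_inf'
  intro a _
  exact List.length_pos_iff.mpr (substPow_ne_nil σ hσne p (by simp))

theorem two_le_Ip_prim (h2 : 2 ≤ Fintype.card A) {k : ℕ} (hk : ∀ a b : A, a ∈ substPow σ k [b]) :
    2 ≤ Ip σ k := by
  obtain ⟨a, a', haa⟩ := Fintype.exists_pair_of_one_lt_card (α := A) (by omega)
  apply Finset.le_inf'
  intro b _
  have h1 : a ∈ substPow σ k [b] := hk a b
  have h2' : a' ∈ substPow σ k [b] := hk a' b
  have hsub : ({a, a'} : Finset A) ⊆ (substPow σ k [b]).toFinset := by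
    intro x hx
    simp only [Finset.mem_insert, Finset.mem_singleton] at hx
    rcases hx with rfl | rfl
    · exact List.mem_toFinset.mpr h1
    · exact List.mem_toFinset.mpr h2'
  calc 2 = ({a, a'} : Finset A).card := (Finset.card_pair haa).symm
    _ ≤ (substPow σ k [b]).toFinset.card := Finset.card_le_card hsub
    _ ≤ (substPow σ k [b]).length := List.toFinset_card_le _

theorem Ip_unbounded (h2 : 2 ≤ Fintype.card A) (hσne : ∀ a, σ a ≠ [])
    {k : ℕ} (hk : ∀ a b : A, a ∈ substPow σ k [b]) (ℓ : ℕ) :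
    ∃ p : ℕ, ℓ ≤ Ip σ p := by
  have key : ∀ m : ℕ, 2 ^ m ≤ Ip σ (m * k) := by
    intro m
    induction m with
    | zero => simpa using Ip_pos hσne 0
    | succ m ih =>
      have h3 : Ip σ (m * k) * Ip σ k ≤ Ip σ (k + m * k) := Ip_add σ k (m * k)
      have h4 : k + m * k = (m + 1) * k := by ring
      have h5 : 2 ^ m * 2 ≤ Ip σ (m * k) * Ip σ k :=
        Nat.mul_le_mul ih (two_le_Ip_prim h2 hk)
      rw [h4] at h3
      calc 2 ^ (m + 1) = 2 ^ m * 2 := by ring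
        _ ≤ _ := le_trans h5 h3
  exact ⟨ℓ * k, le_trans (le_trans (Nat.lt_two_pow_self (n := ℓ)).le (key ℓ)) (le_refl _)⟩

end Growth

section Eigen
variable {A : Type*} [Fintype A] [Nonempty A] [DecidableEq A]
  {σ : A → List A} {lam : ℝ} {β : A → ℝ}

/-- `φ(w) = Σ_{x ∈ w} β x`. -/
noncomputable def phiW (β : A → ℝ) (w : List A) : ℝ := (w.map β).sum

theorem phiW_append (β : A → ℝ) (w z : List A) :
    phiW β (w ++ z) = phiW β w + phiW β z := by
  simp [phiW]

theorem sum_count_mul (β : A → ℝ) (l : List A) :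
    ∑ b : A, (l.count b : ℝ) * β b = phiW β l := by
  induction l with
  | nil => simp [phiW]
  | cons a l ih =>
    have h : ∀ b : A, ((a :: l).count b : ℝ) * β b
        = (l.count b : ℝ) * β b + (if b = a then β b else 0) := by
      intro b
      by_cases hb : b = a
      · subst hb
        rw [List.count_cons_self]
        push_cast
        ring_nf
        simp
      · rw [List.count_cons_of_ne (Ne.symm hb)]
        simp [hb]
    rw [Finset.sum_congr rfl (fun b _ => h b), Finset.sum_add_distrib, ih,
      Finset.sum_ite_eq' Finset.univ a (fun b => β b)]
    simp [phiW]
    ring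
end Eigen

section Eigen2
variable {A : Type*} [Fintype A] [Nonempty A] [DecidableEq A]
  {σ : A → List A} {lam : ℝ} {β : A → ℝ}

theorem phiW_sigma (heig : (incMatrixR σ).mulVec β = lam • β) (a : A) :
    phiW β (σ a) = lam * β a := by
  have h := congrFun heig a
  simp only [Matrix.mulVec, dotProduct, incMatrixR, Matrix.of_apply,
    Pi.smul_apply, smul_eq_mul] at h
  rw [sum_count_mul] at h
  exact h

theorem phiW_substWord (heig : (incMatrixR σ).mulVec β = lam • β) (w : List A) :
    phiW β (substWord σ w) = lam * phiW β w := by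
  induction w with
  | nil => simp [substWord, phiW]
  | cons a w ih =>
    have h : substWord σ (a :: w) = σ a ++ substWord σ w := by
      simp [substWord]
    rw [h, phiW_append, ih, phiW_sigma heig]
    have h2 : phiW β (a :: w) = β a + phiW β w := by simp [phiW]
    rw [h2]
    ring

theorem phiW_substPow (heig : (incMatrixR σ).mulVec β = lam • β) (p : ℕ) (w : List A) :
    phiW β (substPow σ p w) = lam ^ p * phiW β w := by
  induction p with
  | zero => simp [substPow_zero]
  | succ p ih =>
    rw [substPow_succ, phiW_substWord heig, ih]
    ring

theorem phiW_le (β : A → ℝ) (l : List A) :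
    (l.length : ℝ) * (Finset.univ.inf' Finset.univ_nonempty β) ≤ phiW β l ∧
    phiW β l ≤ (l.length : ℝ) * (Finset.univ.sup' Finset.univ_nonempty β) := by
  induction l with
  | nil => simp [phiW]
  | cons a l ih =>
    have h1 : Finset.univ.inf' Finset.univ_nonempty β ≤ β a :=
      Finset.inf'_le _ (Finset.mem_univ a)
    have h2 : β a ≤ Finset.univ.sup' Finset.univ_nonempty β :=
      Finset.le_sup' _ (Finset.mem_univ a)
    have h3 : phiW β (a :: l) = β a + phiW β l := by simp [phiW]
    constructor
    · rw [h3, List.length_cons]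
      push_cast
      nlinarith [ih.1]
    · rw [h3, List.length_cons]
      push_cast
      nlinarith [ih.2]

theorem minb_pos (hβ : ∀ a, 0 < β a) : 0 < Finset.univ.inf' Finset.univ_nonempty β := by
  obtain ⟨a, _, ha⟩ := Finset.exists_mem_eq_inf' (Finset.univ_nonempty) β
  rw [ha]
  exact hβ a

theorem lam_nonneg (hσne : ∀ a, σ a ≠ []) (hβ : ∀ a, 0 < β a)
    (heig : (incMatrixR σ).mulVec β = lam • β) : 0 ≤ lam := by
  obtain ⟨a⟩ := ‹Nonempty A›
  have h1 := (phiW_le β (σ a)).1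
  rw [phiW_sigma heig a] at h1
  have h2 : (1 : ℝ) ≤ (σ a).length := by
    have := List.length_pos_iff.mpr (hσne a)
    exact_mod_cast this
  nlinarith [minb_pos hβ, hβ a]

theorem Sp_le_real (hσne : ∀ a, σ a ≠ []) (hβ : ∀ a, 0 < β a)
    (heig : (incMatrixR σ).mulVec β = lam • β) (p : ℕ) :
    (Sp σ p : ℝ) * (Finset.univ.inf' Finset.univ_nonempty β) ≤
      lam ^ p * (Finset.univ.sup' Finset.univ_nonempty β) := by
  obtain ⟨a, _, ha⟩ := Finset.exists_mem_eq_sup' (Finset.univ_nonempty)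
    (fun a => (substPow σ p [a]).length)
  have h1 := (phiW_le β (substPow σ p [a])).1
  rw [phiW_substPow heig p [a]] at h1
  have h2 : phiW β [a] = β a := by simp [phiW]
  rw [h2] at h1
  have h3 : β a ≤ Finset.univ.sup' Finset.univ_nonempty β :=
    Finset.le_sup' _ (Finset.mem_univ a)
  have hl : (0:ℝ) ≤ lam ^ p := pow_nonneg (lam_nonneg hσne hβ heig) p
  have h4 : (Sp σ p : ℝ) = ((substPow σ p [a]).length : ℝ) := by
    rw [Sp, ha]
  rw [h4]
  nlinarith

theorem Ip_ge_real (hσne : ∀ a, σ a ≠ []) (hβ : ∀ a, 0 < β a)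
    (heig : (incMatrixR σ).mulVec β = lam • β) (p : ℕ) :
    lam ^ p * (Finset.univ.inf' Finset.univ_nonempty β) ≤
      (Ip σ p : ℝ) * (Finset.univ.sup' Finset.univ_nonempty β) := by
  obtain ⟨a, _, ha⟩ := Finset.exists_mem_eq_inf' (Finset.univ_nonempty)
    (fun a => (substPow σ p [a]).length)
  have h1 := (phiW_le β (substPow σ p [a])).2
  rw [phiW_substPow heig p [a]] at h1
  have h2 : phiW β [a] = β a := by simp [phiW]
  rw [h2] at h1
  have h3 : Finset.univ.inf' Finset.univ_nonempty β ≤ β a :=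
    Finset.inf'_le _ (Finset.mem_univ a)
  have hl : (0:ℝ) ≤ lam ^ p := pow_nonneg (lam_nonneg hσne hβ heig) p
  have h4 : (Ip σ p : ℝ) = ((substPow σ p [a]).length : ℝ) := by
    rw [Ip, ha]
  rw [h4]
  nlinarith

end Eigen2

section Gap
variable {A : Type*} [Fintype A] [Nonempty A] [DecidableEq A]
  {σ : A → List A} {u : ℕ → A}

theorem cpt_succ_le (p S : ℕ) (hS : ∀ a, (substPow σ p [a]).length ≤ S) (n : ℕ) :
    cpt σ u p (n+1) ≤ cpt σ u p n + S := by
  rw [cpt_succ]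
  exact Nat.add_le_add_left (hS (u n)) _

theorem cpt_add_le (p S : ℕ) (hS : ∀ a, (substPow σ p [a]).length ≤ S) (n m : ℕ) :
    cpt σ u p (n + m) ≤ cpt σ u p n + m * S := by
  induction m with
  | zero => simp
  | succ m ih =>
    have h := cpt_succ_le (u := u) p S hS (n + m)
    have : n + (m + 1) = (n + m) + 1 := by omega
    rw [this]
    calc cpt σ u p ((n + m) + 1) ≤ cpt σ u p (n + m) + S := h
      _ ≤ cpt σ u p n + m * S + S := by omega
      _ = cpt σ u p n + (m + 1) * S := by ring

theorem exists_cut_in_window (hσne : ∀ a, σ a ≠ []) (p S : ℕ)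
    (hS : ∀ a, (substPow σ p [a]).length ≤ S) (j : ℕ) :
    ∃ s : ℕ, j ≤ cpt σ u p s ∧ cpt σ u p s ≤ j + S := by
  classical
  have hne : ∃ s : ℕ, j ≤ cpt σ u p s := ⟨j, cpt_le_self hσne p j⟩
  refine ⟨Nat.find hne, Nat.find_spec hne, ?_⟩
  rcases Nat.eq_zero_or_pos (Nat.find hne) with h0 | h0
  · rw [h0, cpt_zero]
    omega
  · have hm := Nat.find_min hne (m := Nat.find hne - 1) (by omega)
    have hs := cpt_succ_le (u := u) p S hS (Nat.find hne - 1)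
    have he : Nat.find hne - 1 + 1 = Nat.find hne := by omega
    rw [he] at hs
    omega

theorem exists_block_containing (hσne : ∀ a, σ a ≠ []) (p i : ℕ) :
    ∃ t : ℕ, cpt σ u p t ≤ i ∧ i < cpt σ u p (t+1) := by
  classical
  have hne : ∃ t : ℕ, i < cpt σ u p (t+1) := by
    refine ⟨i, ?_⟩
    have := cpt_le_self (u := u) hσne p (i+1)
    omega
  refine ⟨Nat.find hne, ?_, Nat.find_spec hne⟩
  rcases Nat.eq_zero_or_pos (Nat.find hne) with h0 | h0
  · rw [h0, cpt_zero]
    omega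
  · have := Nat.find_min hne (m := Nat.find hne - 1) (by omega)
    have he : Nat.find hne - 1 + 1 = Nat.find hne := by omega
    rw [he] at this
    omega

end Gap

section Gap2
variable {A : Type*} [Fintype A] [Nonempty A] [DecidableEq A]
  {σ : A → List A} {u : ℕ → A}

theorem isGap_mono {w : List A} {G G' : ℕ} (h : IsGap u w G) (hle : G ≤ G') :
    IsGap u w G' := by
  intro j
  exact (h j).trans (seg_infix u (le_refl j) (Nat.le_add_right j G) (by omega))

theorem gap_exists (h2 : 2 ≤ Fintype.card A) (hσne : ∀ a, σ a ≠ [])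
    (hprim : IsPrimitiveSubst σ) (hfix : IsFixedPoint σ u)
    (w : List A) (hw : w ∈ factors u 2) : ∃ G, IsGap u w G := by
  obtain ⟨i, rfl⟩ := hw
  obtain ⟨k, hk⟩ := hprim
  obtain ⟨P, hP⟩ := Ip_unbounded h2 hσne hk (i + 2)
  -- w is an infix of σ^P(u₀)
  have hc1 : cpt σ u P 1 = (substPow σ P [u 0]).length := by
    rw [cpt_succ, cpt_zero]
    simp
  have hlen : i + 2 ≤ cpt σ u P 1 := by
    rw [hc1]
    exact le_trans hP (Ip_le σ P (u 0))
  have hblock : seg u 0 (cpt σ u P 1) = substPow σ P [u 0] := by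
    rw [← seg_singleton u 0, ← fixpow hfix P 1]
  have hinf1 : seg u i (i + 2) <:+: substPow σ P [u 0] := by
    rw [← hblock]
    exact seg_infix u (Nat.zero_le i) (Nat.le_add_right i 2) hlen
  -- w is an infix of σ^{P+k}(b) for every b
  have hinf2 : ∀ b : A, seg u i (i + 2) <:+: substPow σ (P + k) [b] := by
    intro b
    rw [substPow_add]
    exact hinf1.trans (substPow_singleton_infix σ P (hk (u 0) b))
  -- every window of length 2 S_{P+k} contains a full block
  refine ⟨2 * Sp σ (P + k), ?_⟩
  intro j
  obtain ⟨s, hs1, hs2⟩ := exists_cut_in_window (u := u) hσne (P + k) (Sp σ (P + k))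
    (le_Sp σ (P + k)) j
  have hs3 : cpt σ u (P + k) (s + 1) ≤ j + 2 * Sp σ (P + k) := by
    have := cpt_succ_le (u := u) (P + k) (Sp σ (P + k)) (le_Sp σ (P + k)) s
    omega
  have hbl : seg u (cpt σ u (P + k) s) (cpt σ u (P + k) (s + 1))
      = substPow σ (P + k) [u s] := by
    rw [← seg_block hfix (P + k) (Nat.le_succ s), seg_singleton]
  have h5 : substPow σ (P + k) [u s] <:+: seg u j (j + 2 * Sp σ (P + k)) := by
    rw [← hbl]
    have hmono : cpt σ u (P + k) s ≤ cpt σ u (P + k) (s + 1) :=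
      ((cpt_strictMono (u := u) hσne (P + k)).monotone (Nat.le_succ s))
    exact seg_infix u hs1 hmono hs3
  exact (hinf2 (u s)).trans h5

theorem gap_all (h2 : 2 ≤ Fintype.card A) (hσne : ∀ a, σ a ≠ [])
    (hprim : IsPrimitiveSubst σ) (hfix : IsFixedPoint σ u)
    (w : List A) (hw : w ∈ factors u 2) : IsGap u w (gapConst u) := by
  have hne : {g | IsGap u w g}.Nonempty := gap_exists h2 hσne hprim hfix w hw
  have hmin : IsGap u w (minGap u w) := Nat.sInf_mem hne
  have hfin : {m | ∃ w ∈ factors u 2, m = minGap u w}.Finite := by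
    have h1 : (factors u 2).Finite := by
      apply Set.Finite.subset (List.finite_length_eq A 2)
      intro x hx
      obtain ⟨i, rfl⟩ := hx
      simp [seg_length]
    have h2' : {m | ∃ w ∈ factors u 2, m = minGap u w} = (minGap u) '' (factors u 2) := by
      ext m
      simp [Set.mem_image, eq_comm]
    rw [h2']
    exact h1.image _
  have hle : minGap u w ≤ gapConst u := le_csSup hfin.bddAbove ⟨w, hw, rfl⟩
  exact isGap_mono hmin hle

end Gap2

section KeyWindow
variable {A : Type*} [Fintype A] [Nonempty A] [DecidableEq A]
  {σ : A → List A} {u : ℕ → A} {lam : ℝ} {β : A → ℝ}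

theorem Ip_zero (σ : A → List A) : Ip σ 0 = 1 := by
  rw [Ip]
  apply _root_.le_antisymm
  · obtain ⟨a⟩ := ‹Nonempty A›
    exact Finset.inf'_le _ (Finset.mem_univ a)
  · apply Finset.le_inf'
    intro a _
    rfl

theorem Kst_ge (hσne : ∀ a, σ a ≠ []) (hβ : ∀ a, 0 < β a)
    (heig : (incMatrixR σ).mulVec β = lam • β) (u : ℕ → A) :
    lam * (Cst β : ℝ) ^ 2 * (2 * ((gapConst u : ℝ) + 1)) ≤ (Kst u lam β : ℝ) :=
  le_trans (by
    have h1 : (2 * ((gapConst u : ℝ) + 1)) ≤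
        max (2 * ((gapConst u : ℝ) + 1)) ((Fintype.card A : ℝ) ^ 2) := le_max_left _ _
    have h2 : 0 ≤ lam * (Cst β : ℝ) ^ 2 := by
      have := lam_nonneg hσne hβ heig
      positivity
    nlinarith) (Nat.le_ceil _)

set_option maxHeartbeats 1000000 in
theorem key_window (h2 : 2 ≤ Fintype.card A) (hσne : ∀ a, σ a ≠ [])
    (hprim : IsPrimitiveSubst σ) (hfix : IsFixedPoint σ u)
    (hβ : ∀ a, 0 < β a) (heig : (incMatrixR σ).mulVec β = lam • β)
    (q : ℕ) (hq : 1 ≤ q) (w : List A) (hw : w ∈ factors u (2 * q)) :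
    ∃ B : ℕ, 2 * q ≤ B ∧ B ≤ Kst u lam β * q ∧ ∀ j, w <:+: seg u j (j + B) := by
  classical
  obtain ⟨k, hk⟩ := id hprim
  set g := gapConst u with hg
  -- choose minimal p with 2q ≤ I_p
  have hex : ∃ p : ℕ, 2 * q ≤ Ip σ p := Ip_unbounded h2 hσne hk (2 * q)
  set p := Nat.find hex with hp_def
  have hp : 2 * q ≤ Ip σ p := Nat.find_spec hex
  have hp_pos : 0 < p := by
    rcases Nat.eq_zero_or_pos p with h0 | h0
    · exfalso
      have := hp
      rw [h0, Ip_zero] at this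
      omega
    · exact h0
  have hp_min : Ip σ (p - 1) ≤ 2 * q - 1 := by
    have := Nat.find_min hex (m := p - 1) (by omega)
    omega
  clear_value p
  refine ⟨(g + 1) * Sp σ p, ?_, ?_, ?_⟩
  · -- 2q ≤ (g+1) S_p
    have h1 : Ip σ p ≤ Sp σ p := le_trans (Ip_le σ p (Classical.arbitrary A)) (le_Sp σ p _)
    have h2' : Sp σ p ≤ (g + 1) * Sp σ p := Nat.le_mul_of_pos_left _ (by omega)
    omega
  · -- (g+1) S_p ≤ K q : the numeric estimate
    set mn := Finset.univ.inf' Finset.univ_nonempty β with hmn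
    set mx := Finset.univ.sup' Finset.univ_nonempty β with hmx
    have hmnpos : 0 < mn := minb_pos hβ
    have hmxpos : 0 < mx := by
      obtain ⟨a⟩ := ‹Nonempty A›
      exact lt_of_lt_of_le (hβ a) (Finset.le_sup' _ (Finset.mem_univ a))
    have hlam : 0 ≤ lam := lam_nonneg hσne hβ heig
    have hA1 : (Sp σ p : ℝ) * mn ≤ lam ^ p * mx := Sp_le_real hσne hβ heig p
    have hA2 : lam ^ (p - 1) * mn ≤ (Ip σ (p - 1) : ℝ) * mx := Ip_ge_real hσne hβ heig (p - 1)
    have hA3 : (Ip σ (p - 1) : ℝ) ≤ 2 * (q : ℝ) - 1 := by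
      have : (Ip σ (p-1) : ℝ) ≤ ((2 * q - 1 : ℕ) : ℝ) := Nat.cast_le.mpr hp_min
      calc (Ip σ (p-1) : ℝ) ≤ ((2 * q - 1 : ℕ) : ℝ) := this
        _ = 2 * (q : ℝ) - 1 := by push_cast [Nat.cast_sub (by omega : 1 ≤ 2 * q)]; ring
    have hA4 : mx ≤ (Cst β : ℝ) * mn := by
      have h5 : mx / mn ≤ (Cst β : ℝ) := Nat.le_ceil _
      rw [div_le_iff₀ hmnpos] at h5
      linarith
    have hC0 : (0:ℝ) ≤ (Cst β : ℝ) := Nat.cast_nonneg _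
    have hKb := Kst_ge hσne hβ heig u
    rw [← hg] at hKb
    -- Step: S_p * mn * mn ≤ lam * Ip_{p-1} * mx * mx
    have hpow : lam ^ p = lam * lam ^ (p - 1) := by
      rw [← pow_succ']
      congr 1
      omega
    have hstep1 : (Sp σ p : ℝ) * mn * mn ≤ lam * ((Ip σ (p-1) : ℝ) * mx) * mx := by
      have e1 : (Sp σ p : ℝ) * mn * mn ≤ lam ^ p * mx * mn := by nlinarith
      have e2 : lam ^ p * mx * mn = lam * (lam ^ (p-1) * mn) * mx := by rw [hpow]; ring
      have e3 : lam * (lam ^ (p-1) * mn) * mx ≤ lam * ((Ip σ (p-1) : ℝ) * mx) * mx := by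
        apply mul_le_mul_of_nonneg_right _ (le_of_lt hmxpos)
        exact mul_le_mul_of_nonneg_left hA2 hlam
      calc (Sp σ p : ℝ) * mn * mn ≤ lam ^ p * mx * mn := e1
        _ = lam * (lam ^ (p-1) * mn) * mx := e2
        _ ≤ _ := e3
    have hstep2 : (Sp σ p : ℝ) ≤ lam * (Ip σ (p-1) : ℝ) * (Cst β : ℝ)^2 := by
      have hI0 : (0:ℝ) ≤ (Ip σ (p-1) : ℝ) := Nat.cast_nonneg _
      have hmx2 : mx * mx ≤ (Cst β : ℝ)^2 * (mn * mn) := by nlinarith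
      have e4 : lam * ((Ip σ (p-1) : ℝ) * mx) * mx ≤
          lam * (Ip σ (p-1) : ℝ) * (Cst β : ℝ)^2 * (mn * mn) := by
        have h7 := mul_le_mul_of_nonneg_left hmx2 (mul_nonneg hlam hI0)
        calc lam * ((Ip σ (p-1) : ℝ) * mx) * mx
            = lam * (Ip σ (p-1) : ℝ) * (mx * mx) := by ring
          _ ≤ lam * (Ip σ (p-1) : ℝ) * ((Cst β : ℝ)^2 * (mn * mn)) := h7
          _ = lam * (Ip σ (p-1) : ℝ) * (Cst β : ℝ)^2 * (mn * mn) := by ring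
      have e5 : (Sp σ p : ℝ) * (mn * mn) ≤ lam * (Ip σ (p-1) : ℝ) * (Cst β : ℝ)^2 * (mn * mn) := by
        calc (Sp σ p : ℝ) * (mn * mn) = (Sp σ p : ℝ) * mn * mn := by ring
          _ ≤ lam * ((Ip σ (p-1) : ℝ) * mx) * mx := hstep1
          _ ≤ _ := e4
      exact le_of_mul_le_mul_right e5 (by positivity)
    -- conclude in ℝ then cast
    have hfinal : (((g + 1) * Sp σ p : ℕ) : ℝ) ≤ ((Kst u lam β * q : ℕ) : ℝ) := by
      push_cast
      have hg0 : (0:ℝ) ≤ (g : ℝ) + 1 := by positivity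
      have hq1 : (1:ℝ) ≤ (q : ℝ) := by exact_mod_cast hq
      have hIl : lam * (Ip σ (p-1) : ℝ) * (Cst β : ℝ)^2 ≤
          lam * (2 * (q:ℝ) - 1) * (Cst β : ℝ)^2 := by
        nlinarith [mul_nonneg hlam (mul_nonneg hC0 hC0)]
      have hS : (Sp σ p : ℝ) ≤ lam * (2 * (q:ℝ) - 1) * (Cst β : ℝ)^2 :=
        le_trans hstep2 hIl
      have hh : ((g:ℝ) + 1) * (Sp σ p : ℝ) ≤
          (lam * (Cst β : ℝ)^2 * (2 * ((g:ℝ) + 1))) * (q:ℝ) := by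
        have t1 : ((g:ℝ)+1) * (Sp σ p : ℝ)
            ≤ ((g:ℝ)+1) * (lam * (2 * (q:ℝ) - 1) * (Cst β : ℝ)^2) :=
          mul_le_mul_of_nonneg_left hS hg0
        have t2 : ((g:ℝ)+1) * (lam * (2 * (q:ℝ) - 1) * (Cst β : ℝ)^2)
            ≤ (lam * (Cst β : ℝ)^2 * (2 * ((g:ℝ) + 1))) * (q:ℝ) := by
          nlinarith [mul_nonneg (mul_nonneg hlam (mul_nonneg hC0 hC0)) hg0, sq_nonneg (Cst β : ℝ)]
        linarith
      have hK : (lam * (Cst β : ℝ)^2 * (2 * ((g:ℝ) + 1))) * (q:ℝ) ≤ (Kst u lam β : ℝ) * q := by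
        apply mul_le_mul_of_nonneg_right hKb (by positivity)
      linarith
    exact_mod_cast hfinal
  · -- the covering argument
    intro j
    obtain ⟨i, rfl⟩ := hw
    obtain ⟨t, ht1, ht2⟩ := exists_block_containing (u := u) hσne p i
    have hblen : cpt σ u p (t + 2) = cpt σ u p (t + 1) + (substPow σ p [u (t+1)]).length := by
      have : t + 2 = (t + 1) + 1 := by omega
      rw [this, cpt_succ]
    have hIle : 2 * q ≤ (substPow σ p [u (t+1)]).length := le_trans hp (Ip_le σ p _)
    have hcov : i + 2 * q ≤ cpt σ u p (t + 2) := by omega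
    have hw2 : seg u i (i + 2 * q) <:+: substPow σ p (seg u t (t + 2)) := by
      rw [seg_block hfix p (by omega : t ≤ t + 2)]
      exact seg_infix u ht1 (Nat.le_add_right _ _) hcov
    have hgap : IsGap u (seg u t (t + 2)) g := gap_all h2 hσne hprim hfix _ ⟨t, rfl⟩
    obtain ⟨s, hs1, hs2⟩ := exists_cut_in_window (u := u) hσne p (Sp σ p) (le_Sp σ p) j
    have hocc : seg u t (t + 2) <:+: seg u s (s + g) := hgap s
    have hocc2 : substPow σ p (seg u t (t + 2)) <:+: seg u (cpt σ u p s) (cpt σ u p (s + g)) := by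
      rw [← seg_block hfix p (Nat.le_add_right s g)]
      exact substPow_infix σ p hocc
    have hend : cpt σ u p (s + g) ≤ j + (g + 1) * Sp σ p := by
      have := cpt_add_le (u := u) p (Sp σ p) (le_Sp σ p) s g
      have h6 : (g + 1) * Sp σ p = g * Sp σ p + Sp σ p := by ring
      omega
    have hmono : cpt σ u p s ≤ cpt σ u p (s + g) :=
      (cpt_strictMono (u := u) hσne p).monotone (Nat.le_add_right s g)
    exact (hw2.trans hocc2).trans (seg_infix u hs1 hmono hend)

end KeyWindow

section Wpow
variable {A : Type*}

theorem wpow_succ (v : List A) (n : ℕ) : wpow v (n+1) = v ++ wpow v n := by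
  simp [wpow, List.replicate_succ]

theorem wpow_succ' (v : List A) (n : ℕ) : wpow v (n+1) = wpow v n ++ v := by
  simp [wpow, List.replicate_succ']

theorem wpow_length (v : List A) (n : ℕ) : (wpow v n).length = n * v.length := by
  induction n with
  | zero => simp [wpow]
  | succ n ih => rw [wpow_succ, List.length_append, ih]; ring

theorem wpow_getElem?_period (v : List A) (N r : ℕ) (h : r + v.length < N * v.length) :
    (wpow v N)[r + v.length]? = (wpow v N)[r]? := by
  have hN : 1 ≤ N := by
    rcases Nat.eq_zero_or_pos N with h0 | h0
    · subst h0; omega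
    · exact h0
  obtain ⟨M, rfl⟩ : ∃ M, N = M + 1 := ⟨N - 1, by omega⟩
  have hL : 1 ≤ v.length := by
    by_contra h0
    have hz : v.length = 0 := by omega
    rw [hz, Nat.mul_zero] at h
    omega
  have hr : r < M * v.length := by
    have := h
    rw [Nat.succ_mul] at this
    omega
  have e1 : (wpow v (M+1))[r + v.length]? = (wpow v M)[r]? := by
    rw [wpow_succ, List.getElem?_append_right (by omega : v.length ≤ r + v.length)]
    congr 1
    omega
  have e2 : (wpow v (M+1))[r]? = (wpow v M)[r]? := by
    rw [wpow_succ', List.getElem?_append_left (by rw [wpow_length]; omega)]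
  rw [e1, e2]

theorem seg_getElem? (u : ℕ → A) (i j r : ℕ) (h : r < j - i) :
    (seg u i j)[r]? = some (u (i + r)) := by
  have hlen : r < (seg u i j).length := by rw [seg_length]; omega
  rw [List.getElem?_eq_getElem hlen, seg_getElem]

end Wpow

/-- `K`-power freeness of the fixed point: if `vᴺ ∈ L(u)` for some `N ≥ K`, where
`K = ⌈λ C² max{2(g+1), (#A)²}⌉`, then `v` is the empty word. -/
theorem stmt_6 (A : Type*) [Fintype A] [DecidableEq A] [Nonempty A]
    (h2 : 2 ≤ Fintype.card A)
    (σ : A → List A) (hσne : ∀ a, σ a ≠ [])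
    (hprim : IsPrimitiveSubst σ)
    (u : ℕ → A) (hfix : IsFixedPoint σ u) (hap : AperiodicSeq u)
    (lam : ℝ) (β : A → ℝ) (hβ : ∀ a, 0 < β a)
    (heig : (incMatrixR σ).mulVec β = lam • β) :
    ∀ (v : List A) (N : ℕ), Kst u lam β ≤ N → wpow v N ∈ lang u → v = [] := by
  intro v N hKN hmem
  by_contra hv
  have hq : 1 ≤ v.length := List.length_pos_iff.mpr hv
  obtain ⟨i, m, hseg⟩ := hmem
  have hm : m = N * v.length := by
    have hlen := congrArg List.length hseg
    rw [wpow_length, seg_length] at hlen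
    omega
  rw [hm] at hseg
  -- derive global q-periodicity of u
  apply hap v.length hq
  funext j
  show u (j + v.length) = u j
  have hwin : seg u j (j + 2 * v.length) ∈ factors u (2 * v.length) := ⟨j, rfl⟩
  obtain ⟨B, hB1, hB2, hB3⟩ := key_window h2 hσne hprim hfix hβ heig v.length hq _ hwin
  have hB2' : B ≤ N * v.length := le_trans hB2 (Nat.mul_le_mul_right v.length hKN)
  have hinf : seg u j (j + 2 * v.length) <:+: wpow v N := by
    rw [hseg]
    exact (hB3 i).trans (seg_infix u (le_refl i) (Nat.le_add_right _ _) (by omega))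
  obtain ⟨s, t, hst⟩ := hinf
  have hlen2 : s.length + 2 * v.length + t.length = N * v.length := by
    have h8 := congrArg List.length hst
    rw [wpow_length] at h8
    simp only [List.length_append, seg_length] at h8
    omega
  have hget : ∀ r, r < 2 * v.length → (wpow v N)[s.length + r]? = some (u (j + r)) := by
    intro r hr
    rw [← hst, List.append_assoc,
      List.getElem?_append_right (by omega : s.length ≤ s.length + r)]
    have h9 : s.length + r - s.length = r := by omega
    rw [h9, List.getElem?_append_left (by rw [seg_length]; omega),
      seg_getElem? u j _ r (by omega)]
  have h0 := hget 0 (by omega)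
  have hqq := hget v.length (by omega)
  have hper : (wpow v N)[s.length + v.length]? = (wpow v N)[s.length]? :=
    wpow_getElem?_period v N s.length (by omega)
  rw [hper] at hqq
  rw [Nat.add_zero] at h0
  rw [h0] at hqq
  exact (Option.some.inj hqq).symm
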